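/- (PC = damped GN for the input layer of a deep linear network, general form) In the $L$-layer linear network PC fixed point, the input-layer error can be written as $e_1^* = \frac{\gamma_L}{\gamma_1} W_{L:2}^\top (I + C_\gamma)^{-1}(y - W_{L:1}x)$. When $L = 2$ this equals $(W_2^\top W_2 + \frac{\gamma_1}{\gamma_2}I)^{-1} W_2^\top(y - W_2 W_1 x)$, i.e., a Gauss-Newton update with damping $\rho = \gamma_1/\gamma_2$; but for $L \ge 3$ with generic weights, $e_1^*$ is generally NOT of the form $(W_{L:2}^\top W_{L:2} + \rho I)^{-1} W_{L:2}^\top(y - W_{L:1}x)$ for any scalar $\rho$, because $C_\gamma$ contains cross terms $\frac{\gamma_L}{\gamma_{i-1}}W_{L:i}W_{L:i}^\top$ for $2 < i \le L$. Formally: there exist $3$-layer linear networks (explicit $1\times 1$ or $2\times 2$ weight choices) and $\gamma$'s for which no $\rho \ge 0$ makes the two expressions equal. -/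

import Mathlib

open Matrix


lemma aux_psd_smul {n : ℕ} {A : Matrix (Fin n) (Fin n) ℝ} (h : A.PosSemidef)
    {c : ℝ} (hc : 0 ≤ c) : (c • A).PosSemidef := by
  constructor
  · show (c • A)ᴴ = c • A
    rw [conjTranspose_smul, h.1.eq]
    simp
  · intro x
    exact (h.smul hc).2 x

lemma aux_posdef {n : ℕ} (A : Matrix (Fin n) (Fin n) ℝ) (hA : A.PosSemidef)
    (c : ℝ) (hc : 0 < c) : (A + c • (1 : Matrix (Fin n) (Fin n) ℝ)).PosDef := by
  refine Matrix.PosDef.posSemidef_add hA ?_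
  rw [smul_one_eq_diagonal]
  exact posDef_diagonal_iff.mpr fun _ => hc

lemma aux_psd_mul_transpose {m n : ℕ} (A : Matrix (Fin m) (Fin n) ℝ) :
    (A * Aᵀ).PosSemidef := by
  have := posSemidef_self_mul_conjTranspose A
  simpa using this

lemma aux_psd_transpose_mul {m n : ℕ} (A : Matrix (Fin m) (Fin n) ℝ) :
    (Aᵀ * A).PosSemidef := by
  have := posSemidef_conjTranspose_mul_self A
  simpa using this

lemma part_a (d0 d1 d2 : ℕ) (W1 : Matrix (Fin d1) (Fin d0) ℝ) (W2 : Matrix (Fin d2) (Fin d1) ℝ)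
        (γ1 γ2 : ℝ) (hγ1 : 0 < γ1) (hγ2 : 0 < γ2) (x : Fin d0 → ℝ) (y : Fin d2 → ℝ) :
      (γ2 / γ1) • (W2ᵀ *ᵥ
          (((1 : Matrix (Fin d2) (Fin d2) ℝ) + (γ2 / γ1) • (W2 * W2ᵀ))⁻¹ *ᵥ
            (y - W2 *ᵥ (W1 *ᵥ x)))) =
        (W2ᵀ * W2 + (γ1 / γ2) • (1 : Matrix (Fin d1) (Fin d1) ℝ))⁻¹ *ᵥ
          (W2ᵀ *ᵥ (y - W2 *ᵥ (W1 *ᵥ x))) := by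
  set r := y - W2 *ᵥ (W1 *ᵥ x) with hr
  set M := W2ᵀ * W2 + (γ1 / γ2) • (1 : Matrix (Fin d1) (Fin d1) ℝ) with hM
  set N := (1 : Matrix (Fin d2) (Fin d2) ℝ) + (γ2 / γ1) • (W2 * W2ᵀ) with hN
  have hMpd : M.PosDef := aux_posdef _ (aux_psd_transpose_mul W2) _ (div_pos hγ1 hγ2)
  have hNpd : N.PosDef := by
    rw [hN, add_comm]
    have := aux_posdef _ (aux_psd_smul (aux_psd_mul_transpose W2)
      (le_of_lt (div_pos hγ2 hγ1))) 1 one_pos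
    simpa using this
  have hMdet : IsUnit M.det := hMpd.det_pos.ne'.isUnit
  have hNdet : IsUnit N.det := hNpd.det_pos.ne'.isUnit
  have key : M * ((γ2 / γ1) • W2ᵀ) = W2ᵀ * N := by
    rw [hM, hN]
    have h1 : γ2 / γ1 * (γ1 / γ2) = 1 := by field_simp
    rw [Matrix.add_mul, Matrix.mul_add, Matrix.mul_smul, Matrix.mul_smul, Matrix.smul_mul,
      smul_smul, h1, one_smul, Matrix.one_mul, Matrix.mul_one, Matrix.mul_smul, ← Matrix.mul_assoc, add_comm]
  have key2 : ((γ2 / γ1) • W2ᵀ) * N⁻¹ = M⁻¹ * W2ᵀ := by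
    calc ((γ2 / γ1) • W2ᵀ) * N⁻¹
        = (M⁻¹ * (M * ((γ2 / γ1) • W2ᵀ))) * N⁻¹ := by
          rw [← Matrix.mul_assoc, Matrix.nonsing_inv_mul M hMdet, Matrix.one_mul]
      _ = (M⁻¹ * W2ᵀ) * (N * N⁻¹) := by
          rw [key, ← Matrix.mul_assoc, Matrix.mul_assoc (M⁻¹ * W2ᵀ)]
      _ = M⁻¹ * W2ᵀ := by rw [Matrix.mul_nonsing_inv N hNdet, Matrix.mul_one]
  calc (γ2 / γ1) • (W2ᵀ *ᵥ (N⁻¹ *ᵥ r))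
      = (((γ2 / γ1) • W2ᵀ) * N⁻¹) *ᵥ r := by
        rw [← Matrix.smul_mulVec, Matrix.mulVec_mulVec]
    _ = (M⁻¹ * W2ᵀ) *ᵥ r := by rw [key2]
    _ = M⁻¹ *ᵥ (W2ᵀ *ᵥ r) := by rw [Matrix.mulVec_mulVec]


lemma part_b :
    (∃ (W1 W2 W3 : Matrix (Fin 2) (Fin 2) ℝ) (γ1 γ2 γ3 : ℝ) (x y : Fin 2 → ℝ),
      0 < γ1 ∧ 0 < γ2 ∧ 0 < γ3 ∧
      ∀ ρ : ℝ, 0 ≤ ρ →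
        (γ3 / γ1) • ((W3 * W2)ᵀ *ᵥ
            (((1 : Matrix (Fin 2) (Fin 2) ℝ) + (γ3 / γ2) • (W3 * W3ᵀ) +
                (γ3 / γ1) • ((W3 * W2) * (W3 * W2)ᵀ))⁻¹ *ᵥ
              (y - (W3 * W2 * W1) *ᵥ x))) ≠
          ((W3 * W2)ᵀ * (W3 * W2) + ρ • (1 : Matrix (Fin 2) (Fin 2) ℝ))⁻¹ *ᵥ
            ((W3 * W2)ᵀ *ᵥ (y - (W3 * W2 * W1) *ᵥ x))) := by
  refine ⟨0, !![(1:ℝ)/2, 0; 0, 1], !![(2:ℝ), 0; 0, 1], 1, 1, 1, ![0,0], ![1,1],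
    one_pos, one_pos, one_pos, ?_⟩
  intro ρ hρ h
  have hA : (!![(2:ℝ), 0; 0, 1] : Matrix (Fin 2) (Fin 2) ℝ) * !![(1:ℝ)/2, 0; 0, 1] = 1 := by
    ext i j
    fin_cases i <;> fin_cases j <;>
      simp [Matrix.mul_apply, Fin.sum_univ_two, Matrix.one_apply] <;> norm_num
  have hT : (!![(2:ℝ), 0; 0, 1] : Matrix (Fin 2) (Fin 2) ℝ)ᵀ = !![(2:ℝ), 0; 0, 1] := by
    ext i j; fin_cases i <;> fin_cases j <;> rfl
  rw [hA, hT] at h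
  simp only [Matrix.mul_zero, Matrix.zero_mulVec, sub_zero, Matrix.transpose_one,
    Matrix.one_mul, Matrix.mul_one, one_mulVec, div_one, one_smul] at h
  -- h : (1 + W3W3ᵀ + 1)⁻¹ *ᵥ ![1,1] = (1 + ρ•1)⁻¹ *ᵥ ![1,1]
  have hM : (1 : Matrix (Fin 2) (Fin 2) ℝ) + (!![(2:ℝ), 0; 0, 1] * !![(2:ℝ), 0; 0, 1]) + 1
      = !![(6:ℝ), 0; 0, 3] := by
    ext i j
    fin_cases i <;> fin_cases j <;>
      simp [Matrix.mul_apply, Fin.sum_univ_two, Matrix.one_apply, Matrix.transpose_apply] <;>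
      norm_num
  have hMinv : (!![(6:ℝ), 0; 0, 3] : Matrix (Fin 2) (Fin 2) ℝ)⁻¹ = !![(6:ℝ)⁻¹, 0; 0, 3⁻¹] := by
    apply Matrix.inv_eq_right_inv
    ext i j
    fin_cases i <;> fin_cases j <;>
      simp [Matrix.mul_apply, Fin.sum_univ_two, Matrix.one_apply]
  have hρ1 : (1 : ℝ) + ρ ≠ 0 := by linarith
  have hRinv : ((1 : Matrix (Fin 2) (Fin 2) ℝ) + ρ • 1)⁻¹ = ((1 + ρ)⁻¹) • 1 := by
    apply Matrix.inv_eq_right_inv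
    have h2 : (1 : Matrix (Fin 2) (Fin 2) ℝ) + ρ • 1 = (1 + ρ) • 1 := by
      rw [add_smul, one_smul]
    rw [h2, Matrix.smul_mul, Matrix.mul_smul, Matrix.one_mul, smul_smul,
      mul_inv_cancel₀ hρ1, one_smul]
  rw [hM, hMinv, hRinv] at h
  have h0 := congrFun h 0
  have h1 := congrFun h 1
  simp [Matrix.mulVec, dotProduct, Fin.sum_univ_two, Matrix.smul_mulVec] at h0 h1
  rw [← h0] at h1
  norm_num at h1

/-- **PC = damped GN for the input layer only in the shallow case.**
(a) For `L = 2`, the PC fixed-point input-layer error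
`(γ₂/γ₁) W₂ᵀ (I + (γ₂/γ₁) W₂W₂ᵀ)⁻¹ (y - W₂W₁x)` equals the damped Gauss-Newton update
`(W₂ᵀW₂ + (γ₁/γ₂) I)⁻¹ W₂ᵀ (y - W₂W₁x)` (damping `ρ = γ₁/γ₂`).
(b) For `L = 3` there exist (2×2) weights, positive `γ`'s, and data for which no damping
`ρ ≥ 0` makes the PC fixed-point error
`(γ₃/γ₁) W_{3:2}ᵀ (I + C_γ)⁻¹ (y - W_{3:1}x)` equal to
`(W_{3:2}ᵀ W_{3:2} + ρ I)⁻¹ W_{3:2}ᵀ (y - W_{3:1}x)`, where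
`C_γ = (γ₃/γ₂) W₃W₃ᵀ + (γ₃/γ₁) W_{3:2}W_{3:2}ᵀ`. -/
theorem pc_damped_gn_shallow_only :
    (∀ (d0 d1 d2 : ℕ) (W1 : Matrix (Fin d1) (Fin d0) ℝ) (W2 : Matrix (Fin d2) (Fin d1) ℝ)
        (γ1 γ2 : ℝ), 0 < γ1 → 0 < γ2 → ∀ (x : Fin d0 → ℝ) (y : Fin d2 → ℝ),
      (γ2 / γ1) • (W2ᵀ *ᵥ
          (((1 : Matrix (Fin d2) (Fin d2) ℝ) + (γ2 / γ1) • (W2 * W2ᵀ))⁻¹ *ᵥ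
            (y - W2 *ᵥ (W1 *ᵥ x)))) =
        (W2ᵀ * W2 + (γ1 / γ2) • (1 : Matrix (Fin d1) (Fin d1) ℝ))⁻¹ *ᵥ
          (W2ᵀ *ᵥ (y - W2 *ᵥ (W1 *ᵥ x)))) ∧
    (∃ (W1 W2 W3 : Matrix (Fin 2) (Fin 2) ℝ) (γ1 γ2 γ3 : ℝ) (x y : Fin 2 → ℝ),
      0 < γ1 ∧ 0 < γ2 ∧ 0 < γ3 ∧
      ∀ ρ : ℝ, 0 ≤ ρ →
        (γ3 / γ1) • ((W3 * W2)ᵀ *ᵥ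
            (((1 : Matrix (Fin 2) (Fin 2) ℝ) + (γ3 / γ2) • (W3 * W3ᵀ) +
                (γ3 / γ1) • ((W3 * W2) * (W3 * W2)ᵀ))⁻¹ *ᵥ
              (y - (W3 * W2 * W1) *ᵥ x))) ≠
          ((W3 * W2)ᵀ * (W3 * W2) + ρ • (1 : Matrix (Fin 2) (Fin 2) ℝ))⁻¹ *ᵥ
            ((W3 * W2)ᵀ *ᵥ (y - (W3 * W2 * W1) *ᵥ x))) := by
  exact ⟨fun d0 d1 d2 W1 W2 γ1 γ2 hγ1 hγ2 x y => part_a d0 d1 d2 W1 W2 γ1 γ2 hγ1 hγ2 x y, part_b⟩
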